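/- Let H = 1/2. There exists a constant M > 0 such that for every k ∈ ℤ²₀ with |k| ≥ 2, ∑_{h ∈ ℤ²₀, h ≠ k} 1/(|h|² |k-h|²) ≤ M (ln |k|) / |k|². -/

import Mathlib

/-- Euclidean norm of an element of `ℤ²`. -/
noncomputable def znorm (k : ℤ × ℤ) : ℝ :=
  Real.sqrt ((k.1 : ℝ) ^ 2 + (k.2 : ℝ) ^ 2)

namespace Stmt3Aux

open Finset

/-- sup-norm of a lattice point, as a natural number -/
def nn (h : ℤ × ℤ) : ℕ := max h.1.natAbs h.2.natAbs

/-- the box of radius N -/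
noncomputable def box (N : ℕ) : Finset (ℤ × ℤ) :=
  Finset.Icc (-(N : ℤ)) N ×ˢ Finset.Icc (-(N : ℤ)) N

lemma mem_box {h : ℤ × ℤ} {N : ℕ} : h ∈ box N ↔ nn h ≤ N := by
  rcases h with ⟨a, b⟩
  simp only [box, Finset.mem_product, Finset.mem_Icc, nn, max_le_iff]
  omega

lemma card_box (N : ℕ) : (box N).card = (2 * N + 1) ^ 2 := by
  rw [box, Finset.card_product, Int.card_Icc]
  have h : ((N : ℤ) + 1 - -(N : ℤ)).toNat = 2 * N + 1 := by omega
  rw [h, sq]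

lemma znorm_nonneg (h : ℤ × ℤ) : 0 ≤ znorm h := Real.sqrt_nonneg _

lemma znorm_sq (h : ℤ × ℤ) : znorm h ^ 2 = (h.1 : ℝ) ^ 2 + (h.2 : ℝ) ^ 2 :=
  Real.sq_sqrt (by positivity)

lemma nn_cast (h : ℤ × ℤ) : (nn h : ℝ) = max |(h.1 : ℝ)| |(h.2 : ℝ)| := by
  simp [nn, Nat.cast_max, Nat.cast_natAbs]

lemma nn_le_znorm (h : ℤ × ℤ) : (nn h : ℝ) ≤ znorm h := by
  rw [nn_cast, znorm]
  apply max_le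
  · rw [← Real.sqrt_sq_eq_abs]
    exact Real.sqrt_le_sqrt (by nlinarith [sq_nonneg ((h.2 : ℝ))])
  · rw [← Real.sqrt_sq_eq_abs]
    exact Real.sqrt_le_sqrt (by nlinarith [sq_nonneg ((h.1 : ℝ))])

lemma znorm_sq_le (h : ℤ × ℤ) : znorm h ^ 2 ≤ 2 * (nn h : ℝ) ^ 2 := by
  rw [znorm_sq]
  have h1 : |(h.1 : ℝ)| ≤ (nn h : ℝ) := by rw [nn_cast]; exact le_max_left _ _
  have h2 : |(h.2 : ℝ)| ≤ (nn h : ℝ) := by rw [nn_cast]; exact le_max_right _ _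
  nlinarith [abs_nonneg ((h.1 : ℝ)), abs_nonneg ((h.2 : ℝ)), sq_abs ((h.1 : ℝ)),
    sq_abs ((h.2 : ℝ))]

lemma one_le_nn {h : ℤ × ℤ} (h0 : h ≠ 0) : 1 ≤ nn h := by
  rcases h with ⟨a, b⟩
  simp only [ne_eq, Prod.ext_iff, Prod.fst_zero, Prod.snd_zero, not_and_or, nn] at *
  omega

lemma one_le_znorm {h : ℤ × ℤ} (h0 : h ≠ 0) : 1 ≤ znorm h := by
  have := nn_le_znorm h
  have h1 : (1 : ℝ) ≤ (nn h : ℝ) := by exact_mod_cast one_le_nn h0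
  linarith

lemma znorm_eq_abs (h : ℤ × ℤ) : znorm h = ‖(⟨(h.1 : ℝ), (h.2 : ℝ)⟩ : ℂ)‖ := by
  rw [znorm, Complex.norm_def, Complex.normSq_mk, sq, sq]

lemma znorm_triangle (k h : ℤ × ℤ) : znorm k ≤ znorm h + znorm (k - h) := by
  rw [znorm_eq_abs, znorm_eq_abs, znorm_eq_abs]
  have heq : (⟨(k.1 : ℝ), (k.2 : ℝ)⟩ : ℂ)
      = (⟨(h.1 : ℝ), (h.2 : ℝ)⟩ : ℂ) + ⟨((k - h).1 : ℝ), ((k - h).2 : ℝ)⟩ := by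
    apply Complex.ext <;> simp [Complex.add_re, Complex.add_im] <;> push_cast <;> ring
  rw [heq]
  exact norm_add_le _ _

/-- sum over a box of a function of the sup-norm -/
lemma sum_box (φ : ℕ → ℝ) (N : ℕ) :
    ∑ h ∈ box N, φ (nn h) = φ 0 + ∑ j ∈ Finset.Icc 1 N, (8 * (j : ℝ)) * φ j := by
  induction N with
  | zero =>
    have hb : box 0 = {((0 : ℤ), (0 : ℤ))} := by
      ext ⟨a, b⟩
      simp only [mem_box, nn, Finset.mem_singleton, Prod.mk.injEq, max_le_iff]
      omega
    rw [hb]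
    simp [nn]
  | succ N ih =>
    have hsub : box N ⊆ box (N + 1) := fun h hh =>
      mem_box.mpr (le_trans (mem_box.mp hh) (Nat.le_succ N))
    have hconst : ∀ h ∈ box (N + 1) \ box N, φ (nn h) = φ (N + 1) := by
      intro h hh
      rw [Finset.mem_sdiff] at hh
      have h1 := mem_box.mp hh.1
      have h2 : ¬ nn h ≤ N := fun c => hh.2 (mem_box.mpr c)
      congr 1
      omega
    have hcard : (box (N + 1) \ box N).card = 8 * (N + 1) := by
      rw [Finset.card_sdiff_of_subset hsub, card_box, card_box]
      have : (2 * (N + 1) + 1) ^ 2 = (2 * N + 1) ^ 2 + 8 * (N + 1) := by ring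
      omega
    have hsplit := Finset.sum_sdiff (f := fun h => φ (nn h)) hsub
    rw [← hsplit, Finset.sum_congr rfl hconst, Finset.sum_const, hcard, ih,
      Finset.sum_Icc_succ_top (by omega : 1 ≤ N + 1)]
    push_cast
    ring

/-- bound a sum over an arbitrary finset via a radial majorant -/
lemma sum_le_of_comp {φ : ℕ → ℝ} (hφ : ∀ j, 0 ≤ φ j) {f : ℤ × ℤ → ℝ}
    (hf0 : ∀ h, 0 ≤ f h) (hf : ∀ h, f h ≤ φ (nn h)) {B : ℝ}
    (hB : ∀ N : ℕ, φ 0 + ∑ j ∈ Finset.Icc 1 N, (8 * (j : ℝ)) * φ j ≤ B)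
    (s : Finset (ℤ × ℤ)) : ∑ h ∈ s, f h ≤ B := by
  have hs : s ⊆ box (s.sup nn) := fun h hh => mem_box.mpr (Finset.le_sup hh)
  calc ∑ h ∈ s, f h ≤ ∑ h ∈ s, φ (nn h) := Finset.sum_le_sum fun h _ => hf h
    _ ≤ ∑ h ∈ box (s.sup nn), φ (nn h) :=
        Finset.sum_le_sum_of_subset_of_nonneg hs fun h _ _ => hφ _
    _ = _ := sum_box φ _
    _ ≤ B := hB _

lemma harmonic_bound (N R : ℕ) (hR : 1 ≤ R) :
    ∑ j ∈ Finset.Icc 1 N, (if j ≤ R then (1 : ℝ) / j else 0) ≤ 1 + Real.log R := by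
  rw [← Finset.sum_filter]
  have hsub : (Finset.Icc 1 N).filter (fun j => j ≤ R) ⊆ Finset.Icc 1 R := by
    intro j hj
    simp only [Finset.mem_filter, Finset.mem_Icc] at *
    omega
  have h1 : ∑ j ∈ (Finset.Icc 1 N).filter (fun j => j ≤ R), (1 : ℝ) / j
      ≤ ∑ j ∈ Finset.Icc 1 R, (1 : ℝ) / j :=
    Finset.sum_le_sum_of_subset_of_nonneg hsub fun j _ _ => by positivity
  have h2 : ∑ j ∈ Finset.Icc 1 R, (1 : ℝ) / j = (harmonic R : ℝ) := by
    rw [harmonic_eq_sum_Icc]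
    push_cast
    simp [one_div]
  calc _ ≤ (harmonic R : ℝ) := by rw [← h2]; exact h1
    _ ≤ 1 + Real.log R := harmonic_le_one_add_log R

lemma cube_tail (m : ℕ) (hm : 1 ≤ m) (N : ℕ) :
    ∑ j ∈ Finset.Icc (m + 1) N, (1 : ℝ) / (j : ℝ) ^ 3
      ≤ 1 / (m : ℝ) ^ 2 - 1 / ((max m N : ℕ) : ℝ) ^ 2 := by
  induction N with
  | zero =>
    rw [Finset.Icc_eq_empty (by omega)]
    simp [Nat.max_eq_left (Nat.zero_le m)]
  | succ N ih =>
    by_cases hN : m + 1 ≤ N + 1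
    · have hmN : m ≤ N := by omega
      rw [Finset.sum_Icc_succ_top hN]
      rw [Nat.max_eq_right hmN] at ih
      rw [Nat.max_eq_right (by omega : m ≤ N + 1)]
      have hNpos : (1 : ℝ) ≤ (N : ℝ) := by exact_mod_cast le_trans hm hmN
      have key : (1 : ℝ) / ((N + 1 : ℕ) : ℝ) ^ 3 + 1 / ((N + 1 : ℕ) : ℝ) ^ 2
          ≤ 1 / (N : ℝ) ^ 2 := by
        push_cast
        rw [div_add_div _ _ (by positivity) (by positivity), div_le_div_iff₀ (by positivity) (by positivity)]
        nlinarith [sq_nonneg ((N : ℝ)), sq_nonneg ((N : ℝ) + 1)]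
      push_cast at *
      linarith
    · rw [Finset.Icc_eq_empty (by omega), Nat.max_eq_left (by omega : N + 1 ≤ m)]
      simp

lemma znorm_neg (x : ℤ × ℤ) : znorm (-x) = znorm x := by
  rcases x with ⟨a, b⟩
  simp [znorm]

lemma core1 {a b c : ℝ} (ha : 0 < a) (hb : 0 < b) (hc : 0 < c) (h : c ≤ 2 * b) :
    1 / (a ^ 2 * b ^ 2) ≤ 4 / c ^ 2 * (1 / a ^ 2) := by
  rw [div_mul_div_comm, div_le_div_iff₀ (by positivity) (by positivity)]
  nlinarith [mul_le_mul_of_nonneg_right (show c ^ 2 ≤ 4 * b ^ 2 by nlinarith) (sq_nonneg a)]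

lemma core2 {a b : ℝ} (ha : 0 < a) (hb : 0 < b) (h : a ≤ 2 * b) :
    1 / (a ^ 2 * b ^ 2) ≤ 4 / a ^ 4 := by
  rw [div_le_div_iff₀ (by positivity) (by positivity)]
  nlinarith [mul_le_mul_of_nonneg_right (show a ^ 2 ≤ 4 * b ^ 2 by nlinarith) (sq_nonneg a)]

end Stmt3Aux

open Stmt3Aux

theorem statement_3 :
    ∃ M : ℝ, 0 < M ∧ ∀ k : ℤ × ℤ, k ≠ 0 → 2 ≤ znorm k →
      (∑' h : {h : ℤ × ℤ // h ≠ 0 ∧ h ≠ k},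
          1 / (znorm h.1 ^ 2 * znorm (k - h.1) ^ 2))
        ≤ M * Real.log (znorm k) / znorm k ^ 2 := by
  classical
  refine ⟨1000, by norm_num, fun k hk0 hk2 => ?_⟩
  set c : ℝ := znorm k with hc
  have hc0 : (0 : ℝ) < c := by linarith
  -- the summand, extended by zero
  set F : ℤ × ℤ → ℝ := fun h =>
    if h ≠ 0 ∧ h ≠ k then 1 / (znorm h ^ 2 * znorm (k - h) ^ 2) else 0 with hF
  set f : ℤ × ℤ → ℝ := fun x =>
    if x ≠ 0 ∧ znorm x ≤ 2 * c then 1 / znorm x ^ 2 else 0 with hf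
  set g : ℤ × ℤ → ℝ := fun x =>
    if 2 * c < znorm x then 4 / znorm x ^ 4 else 0 with hg
  have hf0 : ∀ x, 0 ≤ f x := by
    intro x; simp only [hf]; split
    · positivity
    · exact le_rfl
  have hg0 : ∀ x, 0 ≤ g x := by
    intro x; simp only [hg]; split
    · positivity
    · exact le_rfl
  have hF0 : ∀ x, 0 ≤ F x := by
    intro x; simp only [hF]; split
    · positivity
    · exact le_rfl
  set R : ℕ := ⌊2 * c⌋₊ with hRdef
  set R' : ℕ := ⌊c⌋₊ with hR'def
  have hR1 : 1 ≤ R := Nat.le_floor (by push_cast; linarith)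
  have hRle : (R : ℝ) ≤ 2 * c := Nat.floor_le (by positivity)
  have hR'2 : 2 ≤ R' := Nat.le_floor (by push_cast; linarith)
  have hR'le : (R' : ℝ) ≤ c := Nat.floor_le hc0.le
  have hR'gt : c - 1 ≤ (R' : ℝ) := by
    have := Nat.lt_floor_add_one c
    push_cast at this ⊢
    linarith
  -- bound for the finite-range piece
  have hBf : ∀ s : Finset (ℤ × ℤ), ∑ h ∈ s, f h ≤ 8 * (1 + Real.log (2 * c)) := by
    intro s
    set φ : ℕ → ℝ := fun j => if 1 ≤ j ∧ j ≤ R then 1 / (j : ℝ) ^ 2 else 0 with hφ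
    have hφ0 : ∀ j, 0 ≤ φ j := by
      intro j; simp only [hφ]; split
      · positivity
      · exact le_rfl
    refine sum_le_of_comp hφ0 hf0 ?_ ?_ s
    · intro h
      simp only [hf]
      split
      · rename_i hcond
        obtain ⟨hh0, hhle⟩ := hcond
        have h1 : 1 ≤ nn h := one_le_nn hh0
        have h2 : nn h ≤ R := Nat.le_floor (le_trans (nn_le_znorm h) hhle)
        have h1' : (1 : ℝ) ≤ (nn h : ℝ) := by exact_mod_cast h1
        simp only [hφ]
        rw [if_pos ⟨h1, h2⟩]
        apply one_div_le_one_div_of_le (by positivity)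
        exact pow_le_pow_left₀ (by linarith) (nn_le_znorm h) 2
      · exact hφ0 _
    · intro N
      have hφ00 : φ 0 = 0 := by simp [hφ]
      rw [hφ00, zero_add]
      have heq : ∀ j ∈ Finset.Icc 1 N,
          (8 * (j : ℝ)) * φ j = 8 * (if j ≤ R then (1 : ℝ) / j else 0) := by
        intro j hj
        rw [Finset.mem_Icc] at hj
        simp only [hφ]
        by_cases hjR : j ≤ R
        · rw [if_pos ⟨hj.1, hjR⟩, if_pos hjR]
          have hj0 : (0 : ℝ) < (j : ℝ) := by exact_mod_cast hj.1
          field_simp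
        · rw [if_neg (fun hcon => hjR hcon.2), if_neg hjR]
          ring
      rw [Finset.sum_congr rfl heq, ← Finset.mul_sum]
      have hb := harmonic_bound N R hR1
      have hR0 : (0 : ℝ) < (R : ℝ) := by exact_mod_cast hR1
      have hlog : Real.log (R : ℝ) ≤ Real.log (2 * c) := Real.log_le_log hR0 hRle
      linarith
  -- bound for the tail piece
  have hBg : ∀ s : Finset (ℤ × ℤ), ∑ h ∈ s, g h ≤ 128 / c ^ 2 := by
    intro s
    set φ : ℕ → ℝ := fun j => if R' + 1 ≤ j then 4 / (j : ℝ) ^ 4 else 0 with hφ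
    have hφ0 : ∀ j, 0 ≤ φ j := by
      intro j; simp only [hφ]; split
      · positivity
      · exact le_rfl
    refine sum_le_of_comp hφ0 hg0 ?_ ?_ s
    · intro x
      simp only [hg]
      split
      · rename_i hcond
        have hnx : R' + 1 ≤ nn x := by
          by_contra hcon
          push_neg at hcon
          have h1 : (nn x : ℝ) ≤ c := le_trans (by exact_mod_cast Nat.lt_succ_iff.mp hcon) hR'le
          have h2 := znorm_sq_le x
          have h3 := znorm_nonneg x
          nlinarith
        have h1 : (1 : ℝ) ≤ (nn x : ℝ) := by
          have : 1 ≤ nn x := by omega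
          exact_mod_cast this
        simp only [hφ]
        rw [if_pos hnx]
        have hpow : ((nn x : ℝ)) ^ 4 ≤ znorm x ^ 4 :=
          pow_le_pow_left₀ (by linarith) (nn_le_znorm x) 4
        exact div_le_div_of_nonneg_left (by norm_num) (pow_pos (by linarith) 4) hpow
      · exact hφ0 _
    · intro N
      have hφ00 : φ 0 = 0 := by simp [hφ]
      rw [hφ00, zero_add]
      have heq : ∀ j ∈ Finset.Icc 1 N,
          (8 * (j : ℝ)) * φ j = if R' + 1 ≤ j then 32 * ((1 : ℝ) / (j : ℝ) ^ 3) else 0 := by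
        intro j hj
        rw [Finset.mem_Icc] at hj
        simp only [hφ]
        by_cases hjR : R' + 1 ≤ j
        · rw [if_pos hjR, if_pos hjR]
          have hj0 : (0 : ℝ) < (j : ℝ) := by exact_mod_cast hj.1
          field_simp
          ring
        · rw [if_neg hjR, if_neg hjR]
          ring
      rw [Finset.sum_congr rfl heq, ← Finset.sum_filter]
      have hfe : (Finset.Icc 1 N).filter (fun j => R' + 1 ≤ j) = Finset.Icc (R' + 1) N := by
        ext j
        simp only [Finset.mem_filter, Finset.mem_Icc]
        omega
      rw [hfe, ← Finset.mul_sum]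
      have hct := cube_tail R' (by omega) N
      have hmx : (0 : ℝ) < ((max R' N : ℕ) : ℝ) := by
        have : 1 ≤ max R' N := le_trans (by omega) (le_max_left _ _)
        exact_mod_cast this
      have h2 : ∑ j ∈ Finset.Icc (R' + 1) N, (1 : ℝ) / (j : ℝ) ^ 3 ≤ 1 / (R' : ℝ) ^ 2 := by
        have : (0 : ℝ) ≤ 1 / ((max R' N : ℕ) : ℝ) ^ 2 := by positivity
        linarith
      have hR'0 : (0 : ℝ) < (R' : ℝ) := by
        have : 1 ≤ R' := by omega
        exact_mod_cast this
      have h3 : 1 / (R' : ℝ) ^ 2 ≤ 4 / c ^ 2 := by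
        rw [div_le_div_iff₀ (by positivity) (by positivity)]
        nlinarith
      rw [show (128 : ℝ) / c ^ 2 = 32 * (4 / c ^ 2) by ring]
      exact mul_le_mul_of_nonneg_left (le_trans h2 h3) (by norm_num)
  -- pointwise domination
  have hpt : ∀ h, F h ≤ 4 / c ^ 2 * (f h + f (k - h)) + g h := by
    intro h
    simp only [hF]
    split
    · rename_i hcond
      obtain ⟨hh0, hhk⟩ := hcond
      have hkh0 : k - h ≠ 0 := sub_ne_zero.mpr (Ne.symm hhk)
      have ha1 : 1 ≤ znorm h := one_le_znorm hh0
      have hb1 : 1 ≤ znorm (k - h) := one_le_znorm hkh0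
      have ha0 : 0 < znorm h := by linarith
      have hb0 : 0 < znorm (k - h) := by linarith
      have htri : c ≤ znorm h + znorm (k - h) := znorm_triangle k h
      have hfh := hf0 h
      have hfkh := hf0 (k - h)
      have hgh := hg0 h
      have h40 : (0 : ℝ) ≤ 4 / c ^ 2 := by positivity
      by_cases hac : znorm h ≤ 2 * c
      · have hfh_eq : f h = 1 / znorm h ^ 2 := by
          simp only [hf]; rw [if_pos ⟨hh0, hac⟩]
        by_cases hab : znorm h ≤ znorm (k - h)
        · have key := core1 ha0 hb0 hc0 (by linarith : c ≤ 2 * znorm (k - h))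
          calc 1 / (znorm h ^ 2 * znorm (k - h) ^ 2) ≤ 4 / c ^ 2 * f h := by
                rw [hfh_eq]; exact key
            _ ≤ 4 / c ^ 2 * (f h + f (k - h)) + g h := by
                rw [mul_add]; linarith [mul_nonneg h40 hfkh]
        · push_neg at hab
          have hbc : znorm (k - h) ≤ 2 * c := by linarith
          have hfkh_eq : f (k - h) = 1 / znorm (k - h) ^ 2 := by
            simp only [hf]; rw [if_pos ⟨hkh0, hbc⟩]
          have key := core1 hb0 ha0 hc0 (by linarith : c ≤ 2 * znorm h)
          calc 1 / (znorm h ^ 2 * znorm (k - h) ^ 2)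
              = 1 / (znorm (k - h) ^ 2 * znorm h ^ 2) := by ring
            _ ≤ 4 / c ^ 2 * f (k - h) := by rw [hfkh_eq]; exact key
            _ ≤ 4 / c ^ 2 * (f h + f (k - h)) + g h := by
                rw [mul_add]; linarith [mul_nonneg h40 hfh]
      · push_neg at hac
        have htri2 : znorm h ≤ c + znorm (k - h) := by
          have h1 := znorm_triangle h k
          rwa [show h - k = -(k - h) by ring, znorm_neg] at h1
        have hba : znorm h ≤ 2 * znorm (k - h) := by linarith
        have hgh_eq : g h = 4 / znorm h ^ 4 := by
          simp only [hg]; rw [if_pos hac]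
        have key := core2 ha0 hb0 hba
        calc 1 / (znorm h ^ 2 * znorm (k - h) ^ 2) ≤ g h := by rw [hgh_eq]; exact key
          _ ≤ 4 / c ^ 2 * (f h + f (k - h)) + g h := by
              linarith [mul_nonneg h40 (add_nonneg hfh hfkh)]
    · exact add_nonneg (mul_nonneg (by positivity) (add_nonneg (hf0 h) (hf0 (k - h)))) (hg0 h)
  -- per-finset bound for F
  have hfinal : 8 / c ^ 2 * (8 * (1 + Real.log (2 * c))) + 128 / c ^ 2
      ≤ 1000 * Real.log c / c ^ 2 := by
    have hlog2 : Real.log (2 * c) = Real.log 2 + Real.log c :=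
      Real.log_mul (by norm_num) (ne_of_gt hc0)
    have hl2 := Real.log_two_gt_d9
    have hl2' := Real.log_two_lt_d9
    have hlc : Real.log 2 ≤ Real.log c := Real.log_le_log (by norm_num) hk2
    rw [hlog2, div_mul_eq_mul_div, ← add_div, div_le_div_iff₀ (by positivity) (by positivity)]
    have hnum : 8 * (8 * (1 + (Real.log 2 + Real.log c))) + 128 ≤ 1000 * Real.log c := by
      nlinarith
    nlinarith [mul_le_mul_of_nonneg_right hnum (sq_nonneg c)]
  have hFs : ∀ s : Finset (ℤ × ℤ), ∑ h ∈ s, F h ≤ 1000 * Real.log c / c ^ 2 := by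
    intro s
    have h1 : ∑ h ∈ s, F h ≤ ∑ h ∈ s, (4 / c ^ 2 * (f h + f (k - h)) + g h) :=
      Finset.sum_le_sum fun h _ => hpt h
    have h2 : ∑ h ∈ s, (4 / c ^ 2 * (f h + f (k - h)) + g h)
        = 4 / c ^ 2 * ∑ h ∈ s, f h + 4 / c ^ 2 * ∑ h ∈ s, f (k - h) + ∑ h ∈ s, g h := by
      simp only [mul_add]
      rw [Finset.sum_add_distrib, Finset.sum_add_distrib, Finset.mul_sum, Finset.mul_sum]
    have hinj : ∀ x ∈ s, ∀ y ∈ s, k - x = k - y → x = y := by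
      intro x _ y _ hxy
      have : k - (k - x) = k - (k - y) := by rw [hxy]
      simpa using this
    have h3 : ∑ h ∈ s, f (k - h) ≤ 8 * (1 + Real.log (2 * c)) := by
      rw [← Finset.sum_image hinj]
      exact hBf _
    have h4 := hBf s
    have h5 := hBg s
    have h40 : (0 : ℝ) ≤ 4 / c ^ 2 := by positivity
    calc ∑ h ∈ s, F h
        ≤ 4 / c ^ 2 * ∑ h ∈ s, f h + 4 / c ^ 2 * ∑ h ∈ s, f (k - h) + ∑ h ∈ s, g h := by
          rw [← h2]; exact h1
      _ ≤ 4 / c ^ 2 * (8 * (1 + Real.log (2 * c)))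
            + 4 / c ^ 2 * (8 * (1 + Real.log (2 * c))) + 128 / c ^ 2 := by
          gcongr
      _ = 8 / c ^ 2 * (8 * (1 + Real.log (2 * c))) + 128 / c ^ 2 := by ring
      _ ≤ 1000 * Real.log c / c ^ 2 := hfinal
  have hsummable : Summable F := summable_of_sum_le (fun x => hF0 x) hFs
  have htsum : ∑' h, F h ≤ 1000 * Real.log c / c ^ 2 := Summable.tsum_le_of_sum_le hsummable hFs
  have hsub : (∑' h : {h : ℤ × ℤ // h ≠ 0 ∧ h ≠ k},
      1 / (znorm h.1 ^ 2 * znorm (k - h.1) ^ 2)) = ∑' h, F h := by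
    refine Eq.trans (tsum_subtype {h : ℤ × ℤ | h ≠ 0 ∧ h ≠ k}
      fun x => 1 / (znorm x ^ 2 * znorm (k - x) ^ 2)) ?_
    congr 1
    funext x
    simp only [Set.indicator_apply, Set.mem_setOf_eq, hF]
  rw [hsub]
  exact htsum
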